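/- Let a < 0, r > 1, σ = -a·r, and set ξ = (σ/(2a²))·(a(r-2) - σ + √((σ-ar)² + 4aσ)). Assume σ + a·ξ ≠ 0, and define x* = σ√ξ/(σ + aξ), y* = √ξ, z* = σξ/(σ + aξ). Then both points X1* = (x*, y*, z*) and X2* = (-x*, -y*, z*) are zeros of the generalized Lorenz vector field f. -/

import Mathlib

/-- For `a < 0`, `r > 1`, `σ = -a*r`, the points `X₁* = (x*, y*, z*)` and
`X₂* = (-x*, -y*, z*)` are zeros of the generalized Lorenz vector field. -/
theorem lorenz_nonzero_equilibria (a r σ ξ xs ys zs : ℝ) (ha : a < 0) (hr : 1 < r)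
    (hσ : σ = -a * r)
    (hξ : ξ = σ / (2 * a ^ 2) *
      (a * (r - 2) - σ + Real.sqrt ((σ - a * r) ^ 2 + 4 * a * σ)))
    (hden : σ + a * ξ ≠ 0)
    (hxs : xs = σ * Real.sqrt ξ / (σ + a * ξ))
    (hys : ys = Real.sqrt ξ)
    (hzs : zs = σ * ξ / (σ + a * ξ))
    (f : ℝ → ℝ → ℝ → ℝ × ℝ × ℝ)
    (hf : ∀ x1 x2 x3 : ℝ,
      f x1 x2 x3 = (-σ * (x1 - x2) - a * x2 * x3, r * x1 - x2 - x1 * x3, -x3 + x1 * x2)) :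
    f xs ys zs = ((0 : ℝ), (0 : ℝ), (0 : ℝ)) ∧
      f (-xs) (-ys) zs = ((0 : ℝ), (0 : ℝ), (0 : ℝ)) := by
  have ha' : a ≠ 0 := ne_of_lt ha
  set t := Real.sqrt (r * (r - 1)) with htdef
  have ht0 : 0 ≤ t := Real.sqrt_nonneg _
  have ht2 : t ^ 2 = r * (r - 1) := Real.sq_sqrt (by nlinarith)
  have htge : r - 1 ≤ t := by
    have h := Real.sqrt_le_sqrt (show (r - 1) ^ 2 ≤ r * (r - 1) by nlinarith)
    rwa [Real.sqrt_sq (by linarith)] at h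
  have hsqrt : Real.sqrt ((σ - a * r) ^ 2 + 4 * a * σ) = -2 * a * t := by
    have h1 : (σ - a * r) ^ 2 + 4 * a * σ = (-2 * a) ^ 2 * (r * (r - 1)) := by
      rw [hσ]; ring
    rw [h1, Real.sqrt_mul (sq_nonneg _), Real.sqrt_sq (by linarith)]
  have hξ' : ξ = r * (t - (r - 1)) := by
    rw [hξ, hsqrt, hσ]; field_simp; ring
  have hξ0 : 0 ≤ ξ := by nlinarith
  have hys2 : ys ^ 2 = ξ := by rw [hys]; exact Real.sq_sqrt hξ0
  have hrel : ξ ^ 2 + 2 * r * (r - 1) * ξ = r ^ 2 * (r - 1) := by nlinarith [ht2, hξ']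
  have key : σ * (r * σ + (r * a - σ) * ξ) = (σ + a * ξ) ^ 2 := by
    rw [hσ]; linear_combination (-a ^ 2) * hrel
  have hxs' : xs = σ * ys / (σ + a * ξ) := by rw [hxs, hys]
  have hzs' : zs = σ * ξ / (σ + a * ξ) := hzs
  refine ⟨?_, ?_⟩ <;> rw [hf] <;> refine Prod.ext ?_ (Prod.ext ?_ ?_) <;>
      simp only [hxs', hzs'] <;> field_simp
  · ring
  · linear_combination ys * key
  · linear_combination (σ / (σ + ξ * a)) * hys2
  · ring
  · linear_combination (-ys) * key
  · linear_combination (σ / (σ + ξ * a)) * hys2
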